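/- Suppose p ≥ 1, p ≠ 2, and T is an isometric isomorphism of ℓ^p ⊕_p L^p[0,1] onto a Banach space B which is the internal direct sum of disjointly supported subspaces U ≅ ℓ^p (spanned by atoms) and V containing no atoms of the subvector order. Then T maps ℓ^p ⊕ {0} onto U and {0} ⊕ L^p[0,1] onto V. -/

import Mathlib

open MeasureTheory

/-- `f` is a subvector of `g`: `f = g · χ_A` a.e. for some measurable set `A`. -/
def Subvec {α : Type*} [MeasurableSpace α] {μ : Measure α} {p : ENNReal}
    (f g : Lp ℂ p μ) : Prop :=
  ∃ A : Set α, MeasurableSet A ∧ (f : α → ℂ) =ᵐ[μ] A.indicator (g : α → ℂ)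

/-- `g` is an atom of the subvector order: `g ≠ 0` and its only subvectors are `0` and `g`. -/
def SubvecAtom {α : Type*} [MeasurableSpace α] {μ : Measure α} {p : ENNReal}
    (g : Lp ℂ p μ) : Prop :=
  g ≠ 0 ∧ ∀ h : Lp ℂ p μ, Subvec h g → h = 0 ∨ h = g

open Set Real


private theorem mul_self_rpow {x r : ℝ} (hx : 0 < x) : x * x ^ (r-1) = x ^ r := by
  calc x * x^(r-1) = x^(1:ℝ) * x^(r-1) := by rw [Real.rpow_one]
    _ = x^(1+(r-1)) := (Real.rpow_add hx _ _).symm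
    _ = x^r := by norm_num

theorem rpow_add_lt_of_lt_one {x y r : ℝ} (hx : 0 < x) (hy : 0 < y) (hr0 : 0 < r) (hr : r < 1) :
    (x + y) ^ r < x ^ r + y ^ r := by
  have hxy : 0 < x + y := by linarith
  have h1 : (x + y) ^ r = x * (x+y) ^ (r - 1) + y * (x+y) ^ (r-1) := by
    rw [← add_mul, mul_self_rpow hxy]
  have h2 : (x+y) ^ (r-1) < x ^ (r-1) :=
    Real.rpow_lt_rpow_of_neg hx (by linarith) (by linarith)
  have h3 : (x+y) ^ (r-1) < y ^ (r-1) :=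
    Real.rpow_lt_rpow_of_neg hy (by linarith) (by linarith)
  rw [h1, ← mul_self_rpow hx, ← mul_self_rpow hy]
  have := mul_lt_mul_of_pos_left h2 hx
  have := mul_lt_mul_of_pos_left h3 hy
  linarith

theorem rpow_add_gt_of_one_lt {x y r : ℝ} (hx : 0 < x) (hy : 0 < y) (hr : 1 < r) :
    x ^ r + y ^ r < (x + y) ^ r := by
  have hxy : 0 < x + y := by linarith
  have h1 : (x + y) ^ r = x * (x+y) ^ (r - 1) + y * (x+y) ^ (r-1) := by
    rw [← add_mul, mul_self_rpow hxy]
  have h2 : x ^ (r-1) < (x+y) ^ (r-1) :=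
    Real.rpow_lt_rpow hx.le (by linarith) (by linarith)
  have h3 : y ^ (r-1) < (x+y) ^ (r-1) :=
    Real.rpow_lt_rpow hy.le (by linarith) (by linarith)
  rw [h1, ← mul_self_rpow hx, ← mul_self_rpow hy]
  have := mul_lt_mul_of_pos_left h2 hx
  have := mul_lt_mul_of_pos_left h3 hy
  linarith

theorem rpow_add_le_of_le_one {x y r : ℝ} (hx : 0 ≤ x) (hy : 0 ≤ y) (hr0 : 0 < r) (hr : r ≤ 1) :
    (x + y) ^ r ≤ x ^ r + y ^ r := by
  rcases hx.eq_or_lt with rfl | hx'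
  · simp [Real.zero_rpow hr0.ne']
  rcases hy.eq_or_lt with rfl | hy'
  · simp [Real.zero_rpow hr0.ne']
  rcases hr.eq_or_lt with rfl | hr'
  · simp
  exact (rpow_add_lt_of_lt_one hx' hy' hr0 hr').le

theorem rpow_add_ge_of_one_le {x y r : ℝ} (hx : 0 ≤ x) (hy : 0 ≤ y) (hr : 1 ≤ r) :
    x ^ r + y ^ r ≤ (x + y) ^ r := by
  have hr0 : 0 < r := lt_of_lt_of_le one_pos hr
  rcases hx.eq_or_lt with rfl | hx'
  · simp [Real.zero_rpow hr0.ne']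
  rcases hy.eq_or_lt with rfl | hy'
  · simp [Real.zero_rpow hr0.ne']
  rcases hr.eq_or_lt with rfl | hr'
  · simp
  exact (rpow_add_gt_of_one_lt hx' hy' hr').le

/-- The pointwise `p`-defect of a pair of complex numbers. -/
noncomputable def pdef (p : ℝ) (z w : ℂ) : ℝ :=
  ‖z+w‖^p + ‖z-w‖^p - 2*‖z‖^p - 2*‖w‖^p

theorem sq_rpow_half (x r : ℝ) (hx : 0 ≤ x) : (x^(2:ℕ)) ^ (r/2) = x ^ r := by
  rw [← Real.rpow_natCast x 2, ← Real.rpow_mul hx]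
  congr 1
  push_cast
  ring

theorem para (z w : ℂ) : ‖z+w‖^(2:ℕ) + ‖z-w‖^(2:ℕ) = 2*(‖z‖^(2:ℕ) + ‖w‖^(2:ℕ)) := by
  have := parallelogram_law_with_norm ℝ z w
  ring_nf
  ring_nf at this
  linarith

theorem key_le {p : ℝ} (hp1 : 0 < p) (hp2 : p ≤ 2) (z w : ℂ) :
    ‖z+w‖^p + ‖z-w‖^p ≤ 2 * ((‖z‖^(2:ℕ) + ‖w‖^(2:ℕ) : ℝ))^(p/2) := by
  have hcc := Real.concaveOn_rpow (by positivity : (0:ℝ) ≤ p/2) (by linarith : p/2 ≤ 1)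
  have hA : (‖z+w‖^(2:ℕ) : ℝ) ∈ Set.Ici (0:ℝ) := Set.mem_Ici.mpr (by positivity)
  have hB : (‖z-w‖^(2:ℕ) : ℝ) ∈ Set.Ici (0:ℝ) := Set.mem_Ici.mpr (by positivity)
  have h := hcc.2 hA hB (by norm_num : (0:ℝ) ≤ 1/2) (by norm_num : (0:ℝ) ≤ 1/2) (by norm_num)
  simp only [smul_eq_mul] at h
  have hmid : (1/2) * (‖z+w‖^(2:ℕ):ℝ) + (1/2) * (‖z-w‖^(2:ℕ):ℝ) = ‖z‖^(2:ℕ) + ‖w‖^(2:ℕ) := by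
    have := para z w; linarith
  rw [hmid, sq_rpow_half _ _ (norm_nonneg _), sq_rpow_half _ _ (norm_nonneg _)] at h
  linarith

theorem key_ge {p : ℝ} (hp2 : 2 ≤ p) (z w : ℂ) :
    2 * ((‖z‖^(2:ℕ) + ‖w‖^(2:ℕ) : ℝ))^(p/2) ≤ ‖z+w‖^p + ‖z-w‖^p := by
  have hcc := convexOn_rpow (by linarith : (1:ℝ) ≤ p/2)
  have hA : (‖z+w‖^(2:ℕ) : ℝ) ∈ Set.Ici (0:ℝ) := Set.mem_Ici.mpr (by positivity)
  have hB : (‖z-w‖^(2:ℕ) : ℝ) ∈ Set.Ici (0:ℝ) := Set.mem_Ici.mpr (by positivity)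
  have h := hcc.2 hA hB (by norm_num : (0:ℝ) ≤ 1/2) (by norm_num : (0:ℝ) ≤ 1/2) (by norm_num)
  simp only [smul_eq_mul] at h
  have hmid : (1/2) * (‖z+w‖^(2:ℕ):ℝ) + (1/2) * (‖z-w‖^(2:ℕ):ℝ) = ‖z‖^(2:ℕ) + ‖w‖^(2:ℕ) := by
    have := para z w; linarith
  rw [hmid, sq_rpow_half _ _ (norm_nonneg _), sq_rpow_half _ _ (norm_nonneg _)] at h
  linarith

theorem pdef_nonpos {p : ℝ} (hp1 : 0 < p) (hp2 : p ≤ 2) (z w : ℂ) : pdef p z w ≤ 0 := by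
  have h1 := key_le hp1 hp2 z w
  have h2 : ((‖z‖^(2:ℕ) + ‖w‖^(2:ℕ) : ℝ))^(p/2) ≤ ‖z‖^p + ‖w‖^p := by
    have := rpow_add_le_of_le_one (x := ‖z‖^(2:ℕ)) (y := ‖w‖^(2:ℕ)) (r := p/2)
      (by positivity) (by positivity) (by positivity) (by linarith)
    rwa [sq_rpow_half _ _ (norm_nonneg _), sq_rpow_half _ _ (norm_nonneg _)] at this
  unfold pdef; linarith

theorem pdef_nonneg {p : ℝ} (hp2 : 2 ≤ p) (z w : ℂ) : 0 ≤ pdef p z w := by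
  have h1 := key_ge hp2 z w
  have h2 : ‖z‖^p + ‖w‖^p ≤ ((‖z‖^(2:ℕ) + ‖w‖^(2:ℕ) : ℝ))^(p/2) := by
    have := rpow_add_ge_of_one_le (x := ‖z‖^(2:ℕ)) (y := ‖w‖^(2:ℕ)) (r := p/2)
      (by positivity) (by positivity) (by linarith)
    rwa [sq_rpow_half _ _ (norm_nonneg _), sq_rpow_half _ _ (norm_nonneg _)] at this
  unfold pdef; linarith

theorem pdef_zero_of_mul {p : ℝ} (hp1 : 0 < p) {z w : ℂ} (h : z * w = 0) : pdef p z w = 0 := by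
  rcases mul_eq_zero.mp h with rfl | rfl <;>
    simp [pdef, Real.zero_rpow hp1.ne', norm_neg] <;> ring

theorem mul_zero_of_pdef {p : ℝ} (hp1 : 1 ≤ p) (hp2 : p ≠ 2) {z w : ℂ}
    (h : pdef p z w = 0) : z * w = 0 := by
  have hp0 : 0 < p := lt_of_lt_of_le one_pos hp1
  by_contra hzw
  have hz : z ≠ 0 := fun h' => hzw (by simp [h'])
  have hw : w ≠ 0 := fun h' => hzw (by simp [h'])
  have hz' : 0 < ‖z‖ := norm_pos_iff.mpr hz
  have hw' : 0 < ‖w‖ := norm_pos_iff.mpr hw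
  have hz2 : (0:ℝ) < ‖z‖^(2:ℕ) := by positivity
  have hw2 : (0:ℝ) < ‖w‖^(2:ℕ) := by positivity
  rcases lt_or_gt_of_ne hp2 with hlt | hgt
  · -- p < 2 : strict subadditivity
    have hstrict := rpow_add_lt_of_lt_one hz2 hw2 (by positivity : (0:ℝ) < p/2)
      (by linarith : p/2 < 1)
    rw [sq_rpow_half _ _ (norm_nonneg _), sq_rpow_half _ _ (norm_nonneg _)] at hstrict
    have h1 := key_le hp0 hlt.le z w
    unfold pdef at h; linarith
  · have hstrict := rpow_add_gt_of_one_lt hz2 hw2 (by linarith : 1 < p/2)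
    rw [sq_rpow_half _ _ (norm_nonneg _), sq_rpow_half _ _ (norm_nonneg _)] at hstrict
    have h1 := key_ge hgt.le z w
    unfold pdef at h; linarith

open MeasureTheory

/-- `p`-disjointness in a normed group. -/
def Dsj (p : ℝ) {E : Type*} [NormedAddCommGroup E] (x y : E) : Prop :=
  ‖x+y‖^p + ‖x-y‖^p = 2*‖x‖^p + 2*‖y‖^p

theorem dsj_map {p : ℝ} {E F : Type*} [NormedAddCommGroup E] [NormedAddCommGroup F]
    [NormedSpace ℂ E] [NormedSpace ℂ F] (e : E ≃ₗᵢ[ℂ] F) {x y : E} :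
    Dsj p (e x) (e y) ↔ Dsj p x y := by
  simp [Dsj, ← map_add, ← map_sub, e.norm_map]

theorem dsj_zero_right {p : ℝ} (hp : 0 < p) {E : Type*} [NormedAddCommGroup E] (x : E) :
    Dsj p x 0 := by
  simp [Dsj, Real.zero_rpow hp.ne']; ring

theorem dsj_zero_left {p : ℝ} (hp : 0 < p) {E : Type*} [NormedAddCommGroup E] (x : E) :
    Dsj p 0 x := by
  simp [Dsj, Real.zero_rpow hp.ne', norm_neg]; ring

section LpTheory

variable {α : Type*} [MeasurableSpace α] {μ : Measure α} {p : ℝ} [Fact (1 ≤ ENNReal.ofReal p)]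

theorem Lp_norm_rpow (hp : 1 ≤ p) (f : Lp ℂ (ENNReal.ofReal p) μ) :
    ‖f‖ ^ p = ∫ ω, ‖f ω‖ ^ p ∂μ := by
  have hp0 : 0 < p := lt_of_lt_of_le one_pos hp
  have hP0 : ENNReal.ofReal p ≠ 0 := by
    simpa [ENNReal.ofReal_eq_zero] using hp0
  have hPt : ENNReal.ofReal p ≠ ⊤ := ENNReal.ofReal_ne_top
  have htr : (ENNReal.ofReal p).toReal = p := ENNReal.toReal_ofReal hp0.le
  have h := MemLp.eLpNorm_eq_integral_rpow_norm hP0 hPt (Lp.memLp f)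
  rw [htr] at h
  have hint : 0 ≤ ∫ ω, ‖f ω‖ ^ p ∂μ := integral_nonneg fun ω => by positivity
  rw [Lp.norm_def, h, ENNReal.toReal_ofReal (by positivity), ← Real.rpow_mul hint,
    inv_mul_cancel₀ hp0.ne', Real.rpow_one]

theorem Lp_dsj_iff (hp : 1 ≤ p) (hp2 : p ≠ 2) (f g : Lp ℂ (ENNReal.ofReal p) μ) :
    Dsj p f g ↔ (⇑f * ⇑g : α → ℂ) =ᵐ[μ] 0 := by
  have hp0 : 0 < p := lt_of_lt_of_le one_pos hp
  have hP0 : ENNReal.ofReal p ≠ 0 := by simpa [ENNReal.ofReal_eq_zero] using hp0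
  have hPt : ENNReal.ofReal p ≠ ⊤ := ENNReal.ofReal_ne_top
  have htr : (ENNReal.ofReal p).toReal = p := ENNReal.toReal_ofReal hp0.le
  -- integrability of each rpow-norm term
  have hi : ∀ h : Lp ℂ (ENNReal.ofReal p) μ, Integrable (fun ω => ‖h ω‖ ^ p) μ := by
    intro h
    have := (Lp.memLp h).integrable_norm_rpow hP0 hPt
    rwa [htr] at this
  have hae_add : (fun ω => ‖(f + g : Lp ℂ (ENNReal.ofReal p) μ) ω‖ ^ p)
      =ᵐ[μ] fun ω => ‖f ω + g ω‖ ^ p :=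
    (Lp.coeFn_add f g).mono fun ω h => by dsimp only; rw [h, Pi.add_apply]
  have hae_sub : (fun ω => ‖(f - g : Lp ℂ (ENNReal.ofReal p) μ) ω‖ ^ p)
      =ᵐ[μ] fun ω => ‖f ω - g ω‖ ^ p :=
    (Lp.coeFn_sub f g).mono fun ω h => by dsimp only; rw [h, Pi.sub_apply]
  have hiadd : Integrable (fun ω => ‖f ω + g ω‖ ^ p) μ := (hi (f+g)).congr hae_add
  have hisub : Integrable (fun ω => ‖f ω - g ω‖ ^ p) μ := (hi (f-g)).congr hae_sub
  have hFint : Integrable (fun ω => pdef p (f ω) (g ω)) μ := by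
    unfold pdef
    exact ((hiadd.add hisub).sub ((hi f).const_mul 2)).sub ((hi g).const_mul 2)
  have hIF : ∫ ω, pdef p (f ω) (g ω) ∂μ
      = ‖f+g‖^p + ‖f-g‖^p - 2*‖f‖^p - 2*‖g‖^p := by
    have e : (fun ω => pdef p (f ω) (g ω)) = fun ω =>
        (‖f ω + g ω‖^p + ‖f ω - g ω‖^p) - (2*‖f ω‖^p + 2*‖g ω‖^p) := by
      funext ω; unfold pdef; ring
    have nadd : ‖f+g‖^p = ∫ ω, ‖f ω + g ω‖^p ∂μ :=
      (Lp_norm_rpow hp _).trans (integral_congr_ae hae_add)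
    have nsub : ‖f-g‖^p = ∫ ω, ‖f ω - g ω‖^p ∂μ :=
      (Lp_norm_rpow hp _).trans (integral_congr_ae hae_sub)
    have hI1 : Integrable (fun ω => ‖f ω + g ω‖^p + ‖f ω - g ω‖^p) μ := hiadd.add hisub
    have hI2 : Integrable (fun ω => 2*‖f ω‖^p + 2*‖g ω‖^p) μ :=
      ((hi f).const_mul 2).add ((hi g).const_mul 2)
    rw [e, integral_sub hI1 hI2, integral_add hiadd hisub,
      integral_add ((hi f).const_mul 2) ((hi g).const_mul 2),
      integral_const_mul, integral_const_mul, nadd, nsub, Lp_norm_rpow hp f, Lp_norm_rpow hp g]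
    ring
  constructor
  · intro hd
    have hzero : ∫ ω, pdef p (f ω) (g ω) ∂μ = 0 := by
      rw [hIF]; unfold Dsj at hd; linarith
    have hae0 : (fun ω => pdef p (f ω) (g ω)) =ᵐ[μ] 0 := by
      rcases le_or_gt p 2 with hle | hgt
      · have h1 : 0 ≤ᵐ[μ] fun ω => -pdef p (f ω) (g ω) :=
          Filter.Eventually.of_forall fun ω => by
            simpa using pdef_nonpos hp0 hle (f ω) (g ω)
        have h2 : ∫ ω, -pdef p (f ω) (g ω) ∂μ = 0 := by
          rw [integral_neg, hzero, neg_zero]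
        have := (integral_eq_zero_iff_of_nonneg_ae h1 hFint.neg).mp h2
        filter_upwards [this] with ω h
        simpa using congrArg Neg.neg h
      · have h1 : 0 ≤ᵐ[μ] fun ω => pdef p (f ω) (g ω) :=
          Filter.Eventually.of_forall fun ω => pdef_nonneg hgt.le (f ω) (g ω)
        exact (integral_eq_zero_iff_of_nonneg_ae h1 hFint).mp hzero
    filter_upwards [hae0] with ω h
    exact mul_zero_of_pdef hp hp2 h
  · intro hmul
    have hae0 : (fun ω => pdef p (f ω) (g ω)) =ᵐ[μ] 0 := by
      filter_upwards [hmul] with ω h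
      exact pdef_zero_of_mul hp0 h
    have : ∫ ω, pdef p (f ω) (g ω) ∂μ = 0 := by
      have h0 := integral_congr_ae hae0
      simpa using h0
    rw [hIF] at this
    unfold Dsj; linarith
end LpTheory

section lpTheory

variable {p : ℝ} [Fact (1 ≤ ENNReal.ofReal p)]

theorem lp_hasSum_pdef (hp : 1 ≤ p)
    (f g : lp (fun _ : ℕ => ℂ) (ENNReal.ofReal p)) :
    HasSum (fun n => pdef p (f n) (g n))
      (‖f+g‖^p + ‖f-g‖^p - (2*‖f‖^p + 2*‖g‖^p)) := by
  have hp0 : 0 < p := lt_of_lt_of_le one_pos hp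
  have htr : 0 < (ENNReal.ofReal p).toReal := by
    rw [ENNReal.toReal_ofReal hp0.le]; exact hp0
  have Hadd := lp.hasSum_norm htr (f + g)
  have Hsub := lp.hasSum_norm htr (f - g)
  have Hf := lp.hasSum_norm htr f
  have Hg := lp.hasSum_norm htr g
  rw [ENNReal.toReal_ofReal hp0.le] at Hadd Hsub Hf Hg
  have Hadd' : HasSum (fun n => ‖f n + g n‖ ^ p) (‖f+g‖^p) := by
    refine Hadd.congr_fun fun n => ?_
    rw [lp.coeFn_add, Pi.add_apply]
  have Hsub' : HasSum (fun n => ‖f n - g n‖ ^ p) (‖f-g‖^p) := by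
    refine Hsub.congr_fun fun n => ?_
    rw [lp.coeFn_sub, Pi.sub_apply]
  have H := (Hadd'.add Hsub').sub ((Hf.mul_left 2).add (Hg.mul_left 2))
  refine H.congr_fun fun n => ?_
  unfold pdef; ring

theorem lp_dsj_iff (hp : 1 ≤ p) (hp2 : p ≠ 2)
    (f g : lp (fun _ : ℕ => ℂ) (ENNReal.ofReal p)) :
    Dsj p f g ↔ ∀ n, f n * g n = 0 := by
  have hp0 : 0 < p := lt_of_lt_of_le one_pos hp
  have H := lp_hasSum_pdef hp f g
  constructor
  · intro hd
    have hS : (‖f+g‖^p + ‖f-g‖^p - (2*‖f‖^p + 2*‖g‖^p)) = 0 := by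
      unfold Dsj at hd; linarith
    rw [hS] at H
    intro n
    apply mul_zero_of_pdef hp hp2
    rcases le_or_gt p 2 with hle | hgt
    · have H' : HasSum (fun n => -pdef p (f n) (g n)) 0 := by simpa using H.neg
      have h1 := le_hasSum H' n (fun j _ => by simpa using pdef_nonpos hp0 hle (f j) (g j))
      have h2 := pdef_nonpos hp0 hle (f n) (g n)
      linarith
    · have h1 := le_hasSum H n (fun j _ => pdef_nonneg hgt.le (f j) (g j))
      have h2 := pdef_nonneg hgt.le (f n) (g n)
      linarith
  · intro hmul
    have e : (fun n => pdef p (f n) (g n)) = fun _ => (0:ℝ) := by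
      funext n; exact pdef_zero_of_mul hp0 (hmul n)
    rw [e] at H
    have := hasSum_zero.unique H
    unfold Dsj; linarith

end lpTheory

/-- The norm `p`-defect. -/
noncomputable def ndef (p : ℝ) {E : Type*} [NormedAddCommGroup E] (x y : E) : ℝ :=
  ‖x+y‖^p + ‖x-y‖^p - (2*‖x‖^p + 2*‖y‖^p)

theorem dsj_iff_ndef {p : ℝ} {E : Type*} [NormedAddCommGroup E] (x y : E) :
    Dsj p x y ↔ ndef p x y = 0 := by
  unfold Dsj ndef; constructor <;> intro h <;> linarith

section LpTheory2

variable {α : Type*} [MeasurableSpace α] {μ : Measure α} {p : ℝ} [Fact (1 ≤ ENNReal.ofReal p)]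

theorem Lp_ndef_eq (hp : 1 ≤ p) (f g : Lp ℂ (ENNReal.ofReal p) μ) :
    ndef p f g = ∫ ω, pdef p (f ω) (g ω) ∂μ := by
  have hp0 : 0 < p := lt_of_lt_of_le one_pos hp
  have hP0 : ENNReal.ofReal p ≠ 0 := by simpa [ENNReal.ofReal_eq_zero] using hp0
  have hPt : ENNReal.ofReal p ≠ ⊤ := ENNReal.ofReal_ne_top
  have htr : (ENNReal.ofReal p).toReal = p := ENNReal.toReal_ofReal hp0.le
  have hi : ∀ h : Lp ℂ (ENNReal.ofReal p) μ, Integrable (fun ω => ‖h ω‖ ^ p) μ := by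
    intro h
    have := (Lp.memLp h).integrable_norm_rpow hP0 hPt
    rwa [htr] at this
  have hae_add : (fun ω => ‖(f + g : Lp ℂ (ENNReal.ofReal p) μ) ω‖ ^ p)
      =ᵐ[μ] fun ω => ‖f ω + g ω‖ ^ p :=
    (Lp.coeFn_add f g).mono fun ω h => by dsimp only; rw [h, Pi.add_apply]
  have hae_sub : (fun ω => ‖(f - g : Lp ℂ (ENNReal.ofReal p) μ) ω‖ ^ p)
      =ᵐ[μ] fun ω => ‖f ω - g ω‖ ^ p :=
    (Lp.coeFn_sub f g).mono fun ω h => by dsimp only; rw [h, Pi.sub_apply]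
  have hiadd : Integrable (fun ω => ‖f ω + g ω‖ ^ p) μ := (hi (f+g)).congr hae_add
  have hisub : Integrable (fun ω => ‖f ω - g ω‖ ^ p) μ := (hi (f-g)).congr hae_sub
  have e : (fun ω => pdef p (f ω) (g ω)) = fun ω =>
      (‖f ω + g ω‖^p + ‖f ω - g ω‖^p) - (2*‖f ω‖^p + 2*‖g ω‖^p) := by
    funext ω; unfold pdef; ring
  have nadd : ‖f+g‖^p = ∫ ω, ‖f ω + g ω‖^p ∂μ :=
    (Lp_norm_rpow hp _).trans (integral_congr_ae hae_add)
  have nsub : ‖f-g‖^p = ∫ ω, ‖f ω - g ω‖^p ∂μ :=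
    (Lp_norm_rpow hp _).trans (integral_congr_ae hae_sub)
  have hI1 : Integrable (fun ω => ‖f ω + g ω‖^p + ‖f ω - g ω‖^p) μ := hiadd.add hisub
  have hI2 : Integrable (fun ω => 2*‖f ω‖^p + 2*‖g ω‖^p) μ :=
    ((hi f).const_mul 2).add ((hi g).const_mul 2)
  rw [ndef, e, integral_sub hI1 hI2, integral_add hiadd hisub,
    integral_add ((hi f).const_mul 2) ((hi g).const_mul 2),
    integral_const_mul, integral_const_mul, nadd, nsub, Lp_norm_rpow hp f, Lp_norm_rpow hp g]

theorem Lp_ndef_nonpos (hp : 1 ≤ p) (hle : p ≤ 2) (f g : Lp ℂ (ENNReal.ofReal p) μ) :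
    ndef p f g ≤ 0 := by
  have hp0 : 0 < p := lt_of_lt_of_le one_pos hp
  rw [Lp_ndef_eq hp]
  exact integral_nonpos fun ω => pdef_nonpos hp0 hle _ _

theorem Lp_ndef_nonneg (hp : 1 ≤ p) (hge : 2 ≤ p) (f g : Lp ℂ (ENNReal.ofReal p) μ) :
    0 ≤ ndef p f g := by
  rw [Lp_ndef_eq hp]
  exact integral_nonneg fun ω => pdef_nonneg hge _ _

end LpTheory2

section lpTheory2

variable {p : ℝ} [Fact (1 ≤ ENNReal.ofReal p)]

theorem lp_ndef_eq (hp : 1 ≤ p) (f g : lp (fun _ : ℕ => ℂ) (ENNReal.ofReal p)) :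
    ndef p f g = ∑' n, pdef p (f n) (g n) :=
  ((lp_hasSum_pdef hp f g).tsum_eq).symm

theorem lp_ndef_nonpos (hp : 1 ≤ p) (hle : p ≤ 2) (f g : lp (fun _ : ℕ => ℂ) (ENNReal.ofReal p)) :
    ndef p f g ≤ 0 := by
  have hp0 : 0 < p := lt_of_lt_of_le one_pos hp
  rw [lp_ndef_eq hp]
  exact tsum_nonpos fun n => pdef_nonpos hp0 hle _ _

theorem lp_ndef_nonneg (hp : 1 ≤ p) (hge : 2 ≤ p) (f g : lp (fun _ : ℕ => ℂ) (ENNReal.ofReal p)) :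
    0 ≤ ndef p f g := by
  rw [lp_ndef_eq hp]
  exact tsum_nonneg fun n => pdef_nonneg hge _ _

end lpTheory2

section ProdTheory

variable {p : ℝ} [Fact (1 ≤ ENNReal.ofReal p)] {E F : Type*}
  [NormedAddCommGroup E] [NormedAddCommGroup F]

theorem prod_norm_rpow (hp : 1 ≤ p) (x : WithLp (ENNReal.ofReal p) (E × F)) :
    ‖x‖ ^ p = ‖x.fst‖^p + ‖x.snd‖^p := by
  have hp0 : 0 < p := lt_of_lt_of_le one_pos hp
  have htr : (ENNReal.ofReal p).toReal = p := ENNReal.toReal_ofReal hp0.le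
  have h := WithLp.prod_norm_eq_add (by rw [htr]; exact hp0) x
  rw [htr] at h
  rw [h, ← Real.rpow_mul (by positivity), one_div, inv_mul_cancel₀ hp0.ne', Real.rpow_one]

theorem prod_ndef (hp : 1 ≤ p) (x y : WithLp (ENNReal.ofReal p) (E × F)) :
    ndef p x y = ndef p x.fst y.fst + ndef p x.snd y.snd := by
  unfold ndef
  rw [prod_norm_rpow hp, prod_norm_rpow hp, prod_norm_rpow hp, prod_norm_rpow hp,
    WithLp.add_fst, WithLp.add_snd, WithLp.sub_fst, WithLp.sub_snd]
  ring

end ProdTheory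


/-- Norm-theoretic atom. -/
def NAtom (p : ℝ) {E : Type*} [NormedAddCommGroup E] (x : E) : Prop :=
  x ≠ 0 ∧ ∀ y z : E, Dsj p y z → x = y + z → y = 0 ∨ z = 0

theorem natom_map_fwd {p : ℝ} {E F : Type*} [NormedAddCommGroup E] [NormedAddCommGroup F]
    [NormedSpace ℂ E] [NormedSpace ℂ F] (e : E ≃ₗᵢ[ℂ] F) {x : E} (h : NAtom p x) :
    NAtom p (e x) := by
  obtain ⟨h0, hmin⟩ := h
  refine ⟨by simpa using h0, ?_⟩
  intro y z hdsj hsum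
  have h1 : x = e.symm y + e.symm z := by
    apply e.injective
    simp [map_add, hsum]
  have h2 : Dsj p (e.symm y) (e.symm z) := by
    rw [← dsj_map e.symm] at hdsj; exact hdsj
  rcases hmin _ _ h2 h1 with h | h
  · left
    have := congrArg e h
    simpa using this
  · right
    have := congrArg e h
    simpa using this

theorem natom_map {p : ℝ} {E F : Type*} [NormedAddCommGroup E] [NormedAddCommGroup F]
    [NormedSpace ℂ E] [NormedSpace ℂ F] (e : E ≃ₗᵢ[ℂ] F) (x : E) :
    NAtom p (e x) ↔ NAtom p x := by
  constructor
  · intro h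
    have := natom_map_fwd e.symm h
    simpa using this
  · exact natom_map_fwd e

section BTheory

variable {α : Type*} [MeasurableSpace α] {μ : Measure α} {p : ℝ} [Fact (1 ≤ ENNReal.ofReal p)]

theorem subvecAtom_iff_natom (hp : 1 ≤ p) (hp2 : p ≠ 2) (g : Lp ℂ (ENNReal.ofReal p) μ) :
    SubvecAtom g ↔ NAtom p g := by
  constructor
  · rintro ⟨hg0, hmin⟩
    refine ⟨hg0, ?_⟩
    intro y z hdsj hsum
    have hyz : (⇑y * ⇑z : α → ℂ) =ᵐ[μ] 0 := (Lp_dsj_iff hp hp2 y z).mp hdsj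
    have hzmeas := (Lp.aestronglyMeasurable z)
    set z' := hzmeas.mk ⇑z with hz'
    have hzz' : ⇑z =ᵐ[μ] z' := hzmeas.ae_eq_mk
    have hA : MeasurableSet {ω | z' ω = 0} := by
      have : {ω | z' ω = 0} = z' ⁻¹' {0} := rfl
      rw [this]
      exact hzmeas.stronglyMeasurable_mk.measurable (measurableSet_singleton 0)
    have hg' : ⇑g =ᵐ[μ] ⇑y + ⇑z := by
      rw [hsum]; exact Lp.coeFn_add y z
    have hsv : Subvec y g := by
      refine ⟨{ω | z' ω = 0}, hA, ?_⟩
      filter_upwards [hyz, hzz', hg'] with ω h1 h2 h3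
      by_cases hω : z' ω = 0
      · have hz0 : z ω = 0 := h2.trans hω
        have hmem : ω ∈ {ω | z' ω = 0} := hω
        rw [Set.indicator_of_mem hmem, h3, Pi.add_apply, hz0, add_zero]
      · have hz0 : z ω ≠ 0 := fun hc => hω (by rw [← h2]; exact hc)
        have hy0 : y ω = 0 := by
          rcases mul_eq_zero.mp (h1 : y ω * z ω = 0) with h | h
          · exact h
          · exact absurd h hz0
        have hmem : ω ∉ {ω | z' ω = 0} := hω
        rw [Set.indicator_of_notMem hmem, hy0]
    rcases hmin y hsv with h | h
    · exact Or.inl h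
    · right
      rw [h] at hsum
      exact (left_eq_add.mp hsum)
  · rintro ⟨hg0, hmin⟩
    refine ⟨hg0, ?_⟩
    rintro h ⟨A, hA, hrep⟩
    set z := g - h with hzdef
    have hzrep : ⇑z =ᵐ[μ] ⇑g - ⇑h := Lp.coeFn_sub g h
    have hdsj : Dsj p h z := by
      rw [Lp_dsj_iff hp hp2]
      filter_upwards [hrep, hzrep] with ω h1 h2
      rw [Pi.mul_apply, h1, h2, Pi.sub_apply, h1, Pi.zero_apply]
      by_cases hω : ω ∈ A
      · rw [Set.indicator_of_mem hω]; ring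
      · rw [Set.indicator_of_notMem hω]; ring
    have hsum : g = h + z := by rw [hzdef]; abel
    rcases hmin h z hdsj hsum with h' | h'
    · exact Or.inl h'
    · right
      rw [h'] at hsum
      rw [hsum, add_zero]

end BTheory

section VolTheory

open Set

variable {p : ℝ} [Fact (1 ≤ ENNReal.ofReal p)]

local notation "μ₀" => (volume.restrict (Set.Icc (0:ℝ) 1) : Measure ℝ)

set_option maxHeartbeats 1000000 in
theorem Lp01_no_natom (hp : 1 ≤ p) (hp2 : p ≠ 2)
    (f : Lp ℂ (ENNReal.ofReal p) (volume.restrict (Set.Icc (0:ℝ) 1))) : ¬ NAtom p f := by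
  rintro ⟨hf0, hmin⟩
  -- measurable representative
  have hfm := Lp.aestronglyMeasurable f
  set f' := hfm.mk ⇑f with hf'def
  have hff' : ⇑f =ᵐ[μ₀] f' := hfm.ae_eq_mk
  set S : Set ℝ := {ω | f' ω ≠ 0} with hSdef
  have hSmeas : MeasurableSet S := by
    have : S = f' ⁻¹' ({0}ᶜ) := rfl
    rw [this]
    exact hfm.stronglyMeasurable_mk.measurable (measurableSet_singleton 0).compl
  have hStop : μ₀ S ≠ ⊤ := by
    refine ne_top_of_le_ne_top ?_ (measure_mono (Set.subset_univ S))
    rw [Measure.restrict_apply_univ, Real.volume_Icc]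
    exact ENNReal.ofReal_ne_top
  have hSpos : μ₀ S ≠ 0 := by
    intro hS0
    apply hf0
    rw [Lp.eq_zero_iff_ae_eq_zero]
    have : ∀ᵐ ω ∂μ₀, f' ω = 0 := by
      rw [ae_iff]
      exact hS0
    filter_upwards [hff', this] with ω h1 h2
    simp [h1, h2]
  set m : ℝ := (μ₀ S).toReal with hmdef
  have hmpos : 0 < m := ENNReal.toReal_pos hSpos hStop
  -- the distribution function
  set G : ℝ → ℝ := fun t => (μ₀ (S ∩ Set.Iic t)).toReal with hGdef
  have hfin : ∀ t, μ₀ (S ∩ Set.Iic t) ≠ ⊤ :=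
    fun t => ne_top_of_le_ne_top hStop (measure_mono Set.inter_subset_left)
  have hmono : ∀ {t1 t2 : ℝ}, t1 ≤ t2 → G t1 ≤ G t2 := by
    intro t1 t2 h
    exact ENNReal.toReal_mono (hfin t2)
      (measure_mono (Set.inter_subset_inter_right _ (Set.Iic_subset_Iic.mpr h)))
  have hlip : ∀ {t1 t2 : ℝ}, t1 ≤ t2 → G t2 ≤ G t1 + (t2 - t1) := by
    intro t1 t2 h
    have hsub : S ∩ Set.Iic t2 ⊆ (S ∩ Set.Iic t1) ∪ Set.Ioc t1 t2 := by
      rintro ω ⟨hω1, hω2⟩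
      rcases le_or_gt ω t1 with h' | h'
      · exact Or.inl ⟨hω1, h'⟩
      · exact Or.inr ⟨h', hω2⟩
    have h1 : μ₀ (S ∩ Set.Iic t2) ≤ μ₀ (S ∩ Set.Iic t1) + μ₀ (Set.Ioc t1 t2) :=
      le_trans (measure_mono hsub) (measure_union_le _ _)
    have h2 : μ₀ (Set.Ioc t1 t2) ≤ ENNReal.ofReal (t2 - t1) := by
      calc μ₀ (Set.Ioc t1 t2) ≤ volume (Set.Ioc t1 t2) := by
            rw [Measure.restrict_apply measurableSet_Ioc]
            exact measure_mono Set.inter_subset_left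
        _ = ENNReal.ofReal (t2 - t1) := Real.volume_Ioc
    calc G t2 ≤ (μ₀ (S ∩ Set.Iic t1) + ENNReal.ofReal (t2 - t1)).toReal := by
          apply ENNReal.toReal_mono
          · exact ENNReal.add_ne_top.mpr ⟨hfin t1, ENNReal.ofReal_ne_top⟩
          · exact le_trans h1 (add_le_add le_rfl h2)
      _ = G t1 + (t2 - t1) := by
          rw [ENNReal.toReal_add (hfin t1) ENNReal.ofReal_ne_top,
            ENNReal.toReal_ofReal (by linarith)]
  have hcont : Continuous G := by
    refine (LipschitzWith.of_dist_le_mul (K := 1) (f := G) ?_).continuous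
    intro t1 t2
    rw [Real.dist_eq, Real.dist_eq, NNReal.coe_one, one_mul]
    rcases le_total t1 t2 with h | h
    · have h1 := hmono h
      have h2 := hlip h
      rw [abs_sub_comm, abs_of_nonneg (by linarith), abs_of_nonpos (by linarith)]
      linarith
    · have h1 := hmono h
      have h2 := hlip h
      rw [abs_of_nonneg (by linarith), abs_of_nonneg (by linarith)]
      linarith
  have hG0 : G 0 = 0 := by
    have : μ₀ (S ∩ Set.Iic 0) = 0 := by
      have hsub : (S ∩ Set.Iic 0) ∩ Set.Icc (0:ℝ) 1 ⊆ {0} := by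
        rintro ω ⟨⟨_, h1⟩, h2, _⟩
        exact Set.mem_singleton_iff.mpr (le_antisymm h1 h2)
      rw [Measure.restrict_apply (hSmeas.inter measurableSet_Iic)]
      exact le_antisymm (le_trans (measure_mono hsub) (by simp)) zero_le
    rw [hGdef]; simp [this]
  have hset : S ∩ Set.Iic 1 ∩ Set.Icc (0:ℝ) 1 = S ∩ Set.Icc (0:ℝ) 1 := by
    ext ω
    constructor
    · rintro ⟨⟨h1, _⟩, h2⟩; exact ⟨h1, h2⟩
    · rintro ⟨h1, h2, h3⟩; exact ⟨⟨h1, h3⟩, h2, h3⟩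
  have hG1 : G 1 = m := by
    simp only [hGdef, hmdef]
    rw [Measure.restrict_apply (hSmeas.inter measurableSet_Iic),
      Measure.restrict_apply hSmeas, hset]
  -- intermediate value
  have hivt : ∃ t ∈ Set.Icc (0:ℝ) 1, G t = m/2 := by
    have := intermediate_value_Icc (zero_le_one) hcont.continuousOn
    have hmem : m/2 ∈ Set.Icc (G 0) (G 1) := by
      rw [hG0, hG1]; constructor <;> linarith
    obtain ⟨t, ht, hGt⟩ := this hmem
    exact ⟨t, ht, hGt⟩
  obtain ⟨t, _, hGt⟩ := hivt
  have hhalf1 : μ₀ (S ∩ Set.Iic t) ≠ 0 := by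
    intro h0
    rw [hGdef] at hGt
    simp only [h0, ENNReal.toReal_zero] at hGt
    linarith
  have hhalf2 : μ₀ (S \ Set.Iic t) ≠ 0 := by
    intro h0
    have hsub : S ⊆ (S ∩ Set.Iic t) ∪ (S \ Set.Iic t) := by
      intro ω hω
      by_cases h : ω ∈ Set.Iic t
      · exact Or.inl ⟨hω, h⟩
      · exact Or.inr ⟨hω, h⟩
    have h1 : μ₀ S ≤ μ₀ (S ∩ Set.Iic t) := by
      calc μ₀ S ≤ μ₀ (S ∩ Set.Iic t) + μ₀ (S \ Set.Iic t) :=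
            le_trans (measure_mono hsub) (measure_union_le _ _)
        _ = μ₀ (S ∩ Set.Iic t) := by rw [h0, add_zero]
    have h2 : m ≤ m/2 := by
      rw [hmdef, ← hGt, hGdef]
      exact ENNReal.toReal_mono (hfin t) h1
    linarith
  -- build the splitting
  have hmem : MemLp ((Set.Iic t).indicator ⇑f) (ENNReal.ofReal p) μ₀ :=
    (Lp.memLp f).indicator measurableSet_Iic
  set y : Lp ℂ (ENNReal.ofReal p) μ₀ := hmem.toLp _ with hydef
  have hyrep : ⇑y =ᵐ[μ₀] (Set.Iic t).indicator ⇑f := hmem.coeFn_toLp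
  set z : Lp ℂ (ENNReal.ofReal p) μ₀ := f - y with hzdef
  have hzrep : ⇑z =ᵐ[μ₀] ⇑f - ⇑y := Lp.coeFn_sub f y
  have hdsj : Dsj p y z := by
    rw [Lp_dsj_iff hp hp2]
    filter_upwards [hyrep, hzrep] with ω h1 h2
    rw [Pi.mul_apply, h1, h2, Pi.sub_apply, h1, Pi.zero_apply]
    by_cases hω : ω ∈ Set.Iic t
    · rw [Set.indicator_of_mem hω]; ring
    · rw [Set.indicator_of_notMem hω]; ring
  have hy0 : y ≠ 0 := by
    intro h0
    apply hhalf1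
    have hae : ⇑y =ᵐ[μ₀] 0 := by rw [← Lp.eq_zero_iff_ae_eq_zero]; exact h0
    have hpt : ∀ᵐ ω ∂μ₀, ¬ (ω ∈ S ∩ Set.Iic t) := by
      filter_upwards [hyrep, hae, hff'] with ω h1 h2 h3
      rintro ⟨hS, hI⟩
      apply hS
      have : (Set.Iic t).indicator (⇑f) ω = 0 := by rw [← h1, h2]; rfl
      rw [Set.indicator_of_mem hI] at this
      rw [← h3]; exact this
    exact measure_mono_null
      (fun ω hω => by simp only [Set.mem_setOf_eq]; exact not_not_intro hω) (ae_iff.mp hpt)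
  have hz0 : z ≠ 0 := by
    intro h0
    apply hhalf2
    have hae : ⇑z =ᵐ[μ₀] 0 := by rw [← Lp.eq_zero_iff_ae_eq_zero]; exact h0
    have hpt : ∀ᵐ ω ∂μ₀, ¬ (ω ∈ S \ Set.Iic t) := by
      filter_upwards [hyrep, hzrep, hae, hff'] with ω h1 h2 h3 h4
      rintro ⟨hS, hI⟩
      apply hS
      have hz' : (0:ℂ) = ⇑f ω - (Set.Iic t).indicator (⇑f) ω := by
        have := h2.symm.trans h3
        rw [Pi.sub_apply, h1] at this
        simpa using this.symm
      rw [Set.indicator_of_notMem hI, sub_zero] at hz'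
      rw [← h4]; exact hz'.symm
    exact measure_mono_null
      (fun ω hω => by simp only [Set.mem_setOf_eq]; exact not_not_intro hω) (ae_iff.mp hpt)
  have hsum : f = y + z := by rw [hzdef]; abel
  rcases hmin y z hdsj hsum with h | h
  · exact hy0 h
  · exact hz0 h

end VolTheory

section DomTheory

variable {p : ℝ} [Fact (1 ≤ ENNReal.ofReal p)]

local notation "lpN" => lp (fun _ : ℕ => ℂ) (ENNReal.ofReal p)
local notation "LpV" => Lp ℂ (ENNReal.ofReal p) (volume.restrict (Set.Icc (0:ℝ) 1))
local notation "DomT" => WithLp (ENNReal.ofReal p) (lp (fun _ : ℕ => ℂ) (ENNReal.ofReal p) ×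
  Lp ℂ (ENNReal.ofReal p) (volume.restrict (Set.Icc (0:ℝ) 1)))

theorem dom_ext {x y : DomT} (h1 : x.fst = y.fst) (h2 : x.snd = y.snd) : x = y :=
  by cases x; cases y; exact congrArg (WithLp.toLp _) (Prod.ext h1 h2)

theorem dom_dsj_iff (hp : 1 ≤ p) (x y : DomT) :
    Dsj p x y ↔ Dsj p x.fst y.fst ∧ Dsj p x.snd y.snd := by
  rw [dsj_iff_ndef, dsj_iff_ndef, dsj_iff_ndef, prod_ndef hp]
  rcases le_total p 2 with hle | hge
  · have h1 := lp_ndef_nonpos hp hle x.fst y.fst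
    have h2 := Lp_ndef_nonpos hp hle x.snd y.snd
    constructor
    · intro h; constructor <;> linarith
    · rintro ⟨a, b⟩; rw [a, b]; ring
  · have h1 := lp_ndef_nonneg hp hge x.fst y.fst
    have h2 := Lp_ndef_nonneg hp hge x.snd y.snd
    constructor
    · intro h; constructor <;> linarith
    · rintro ⟨a, b⟩; rw [a, b]; ring

theorem lp_eq_zero_of_coords (a : lpN) (h : ∀ n, a n = 0) : a = 0 :=
  lp.ext (by funext n; rw [h n, lp.coeFn_zero, Pi.zero_apply])

theorem dom_natom_iff (hp : 1 ≤ p) (hp2 : p ≠ 2) (x : DomT) :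
    NAtom p x ↔ x.snd = 0 ∧ ∃ n : ℕ, x.fst n ≠ 0 ∧
      x.fst = lp.single (ENNReal.ofReal p) n (x.fst n) := by
  have hp0 : 0 < p := lt_of_lt_of_le one_pos hp
  constructor
  · rintro ⟨hx0, hmin⟩
    have hsnd : x.snd = 0 := by
      by_contra hs
      rcases eq_or_ne x.fst 0 with hf | hf
      · -- x is concentrated in the continuous part; contradiction with no atoms there
        apply Lp01_no_natom hp hp2 x.snd
        refine ⟨hs, ?_⟩
        intro y z hdsj hsum
        set Y : DomT := (WithLp.equiv _ _).symm (0, y) with hY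
        set Z : DomT := (WithLp.equiv _ _).symm (0, z) with hZ
        have hYf : Y.fst = 0 := rfl
        have hYs : Y.snd = y := rfl
        have hZf : Z.fst = 0 := rfl
        have hZs : Z.snd = z := rfl
        have hD : Dsj p Y Z := by
          rw [dom_dsj_iff hp, hYf, hYs, hZf, hZs]
          exact ⟨dsj_zero_right hp0 0, hdsj⟩
        have hxsum : x = Y + Z := by
          refine dom_ext ?_ ?_
          · rw [WithLp.add_fst, hYf, hZf, hf, add_zero]
          · rw [WithLp.add_snd, hYs, hZs, hsum]
        rcases hmin Y Z hD hxsum with h | h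
        · left; rw [← hYs, h]; exact WithLp.zero_snd
        · right; rw [← hZs, h]; exact WithLp.zero_snd
      · -- both components nonzero: split along the two factors
        set Y : DomT := (WithLp.equiv _ _).symm (x.fst, 0) with hY
        set Z : DomT := (WithLp.equiv _ _).symm (0, x.snd) with hZ
        have hYf : Y.fst = x.fst := rfl
        have hYs : Y.snd = 0 := rfl
        have hZf : Z.fst = 0 := rfl
        have hZs : Z.snd = x.snd := rfl
        have hD : Dsj p Y Z := by
          rw [dom_dsj_iff hp, hYf, hYs, hZf, hZs]
          exact ⟨dsj_zero_right hp0 _, dsj_zero_left hp0 _⟩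
        have hxsum : x = Y + Z := by
          refine dom_ext ?_ ?_
          · rw [WithLp.add_fst, hYf, hZf, add_zero]
          · rw [WithLp.add_snd, hYs, hZs, zero_add]
        rcases hmin Y Z hD hxsum with h | h
        · exact hf (by rw [← hYf, h]; exact WithLp.zero_fst)
        · exact hs (by rw [← hZs, h]; exact WithLp.zero_snd)
    have hfne : x.fst ≠ 0 := by
      intro h0
      exact hx0 (dom_ext (by rw [h0]; exact WithLp.zero_fst.symm)
        (by rw [hsnd]; exact WithLp.zero_snd.symm))
    have hex : ∃ n : ℕ, x.fst n ≠ 0 := by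
      by_contra hall
      push_neg at hall
      exact hfne (lp_eq_zero_of_coords _ hall)
    obtain ⟨n, hn⟩ := hex
    refine ⟨hsnd, n, hn, ?_⟩
    have honly : ∀ m : ℕ, m ≠ n → x.fst m = 0 := by
      intro m hm
      by_contra hmne
      set s : lpN := lp.single (ENNReal.ofReal p) n (x.fst n) with hs
      set Y : DomT := (WithLp.equiv _ _).symm (s, 0) with hY
      set Z : DomT := (WithLp.equiv _ _).symm (x.fst - s, 0) with hZ
      have hYf : Y.fst = s := rfl
      have hYs : Y.snd = 0 := rfl
      have hZf : Z.fst = x.fst - s := rfl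
      have hZs : Z.snd = 0 := rfl
      have hD : Dsj p Y Z := by
        rw [dom_dsj_iff hp, hYf, hYs, hZf, hZs]
        constructor
        · rw [lp_dsj_iff hp hp2]
          intro k
          rcases eq_or_ne k n with rfl | hk
          · have : (x.fst - s : lpN) k = x.fst k - s k := by
              rw [lp.coeFn_sub, Pi.sub_apply]
            rw [this, hs, lp.single_apply_self, sub_self, mul_zero]
          · rw [hs, lp.single_apply_ne _ _ _ hk, zero_mul]
        · exact dsj_zero_right hp0 _
      have hxsum : x = Y + Z := by
        refine dom_ext ?_ ?_
        · rw [WithLp.add_fst, hYf, hZf]; abel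
        · rw [WithLp.add_snd, hYs, hZs, hsnd, zero_add]
      rcases hmin Y Z hD hxsum with h | h
      · have hs0 : s = 0 := by rw [← hYf, h]; exact WithLp.zero_fst
        have h0 : s n = (0 : lpN) n := by rw [hs0]
        rw [hs, lp.single_apply_self, lp.coeFn_zero, Pi.zero_apply] at h0
        exact hn h0
      · have hz0 : x.fst - s = 0 := by rw [← hZf, h]; exact WithLp.zero_fst
        have h0 : (x.fst - s : lpN) m = (0 : lpN) m := by rw [hz0]
        rw [lp.coeFn_sub, Pi.sub_apply, hs, lp.single_apply_ne _ _ _ hm, sub_zero,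
          lp.coeFn_zero, Pi.zero_apply] at h0
        exact hmne h0
    apply lp.ext
    funext m
    rcases eq_or_ne m n with rfl | hm
    · rw [lp.single_apply_self]
    · rw [lp.single_apply_ne _ _ _ hm, honly m hm]
  · rintro ⟨hsnd, n, hn, hsingle⟩
    have hx0 : x ≠ 0 := by
      intro h0
      apply hn
      have : x.fst = 0 := by rw [h0]; exact WithLp.zero_fst
      rw [this, lp.coeFn_zero, Pi.zero_apply]
    refine ⟨hx0, ?_⟩
    intro y z hdsj hsum
    obtain ⟨hd1, hd2⟩ := (dom_dsj_iff hp y z).mp hdsj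
    -- second components vanish
    have hs2 : y.snd + z.snd = 0 := by
      rw [← WithLp.add_snd, ← hsum, hsnd]
    have hzs : z.snd = -y.snd := by
      rw [eq_neg_iff_add_eq_zero, add_comm]; exact hs2
    have hysnd : y.snd = 0 := by
      rw [Lp.eq_zero_iff_ae_eq_zero]
      have hmul := (Lp_dsj_iff hp hp2 y.snd z.snd).mp hd2
      have hneg : ⇑z.snd =ᵐ[volume.restrict (Set.Icc (0:ℝ) 1)] -⇑y.snd := by
        rw [hzs]; exact Lp.coeFn_neg y.snd
      filter_upwards [hmul, hneg] with ω h1 h2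
      rw [Pi.mul_apply, h2, Pi.neg_apply] at h1
      have : y.snd ω * y.snd ω = 0 := by
        have := h1
        simp only [Pi.zero_apply] at this ⊢
        rw [mul_neg] at this
        exact neg_eq_zero.mp this
      simpa using mul_self_eq_zero.mp this
    have hzsnd : z.snd = 0 := by rw [hzs, hysnd, neg_zero]
    -- first components
    have hcoord := (lp_dsj_iff hp hp2 y.fst z.fst).mp hd1
    have hsumf : ∀ k, y.fst k + z.fst k = x.fst k := by
      intro k
      have : x.fst = y.fst + z.fst := by rw [hsum, WithLp.add_fst]
      rw [this, lp.coeFn_add, Pi.add_apply]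
    have hoff : ∀ k, k ≠ n → y.fst k = 0 ∧ z.fst k = 0 := by
      intro k hk
      have h1 := hsumf k
      have hxk : x.fst k = 0 := by
        rw [hsingle, lp.single_apply_ne _ _ _ hk]
      rw [hxk] at h1
      have h2 := hcoord k
      have hz : z.fst k = -(y.fst k) := by linear_combination h1
      rw [hz, mul_neg, neg_eq_zero, mul_self_eq_zero] at h2
      exact ⟨h2, by rw [hz, h2, neg_zero]⟩
    rcases mul_eq_zero.mp (hcoord n) with hyn | hzn
    · left
      refine dom_ext ?_ hysnd
      refine lp_eq_zero_of_coords _ fun k => ?_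
      rcases eq_or_ne k n with rfl | hk
      · exact hyn
      · exact (hoff k hk).1
    · right
      refine dom_ext ?_ hzsnd
      refine lp_eq_zero_of_coords _ fun k => ?_
      rcases eq_or_ne k n with rfl | hk
      · exact hzn
      · exact (hoff k hk).2

end DomTheory

section DomTheory2

variable {p : ℝ} [Fact (1 ≤ ENNReal.ofReal p)]

local notation "lpN" => lp (fun _ : ℕ => ℂ) (ENNReal.ofReal p)
local notation "LpV" => Lp ℂ (ENNReal.ofReal p) (volume.restrict (Set.Icc (0:ℝ) 1))
local notation "DomT" => WithLp (ENNReal.ofReal p) (lp (fun _ : ℕ => ℂ) (ENNReal.ofReal p) ×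
  Lp ℂ (ENNReal.ofReal p) (volume.restrict (Set.Icc (0:ℝ) 1)))

noncomputable def domCE : WithLp (ENNReal.ofReal p) (lp (fun _ : ℕ => ℂ) (ENNReal.ofReal p) ×
    Lp ℂ (ENNReal.ofReal p) (volume.restrict (Set.Icc (0:ℝ) 1))) ≃L[ℂ]
    (lp (fun _ : ℕ => ℂ) (ENNReal.ofReal p)) ×
      (Lp ℂ (ENNReal.ofReal p) (volume.restrict (Set.Icc (0:ℝ) 1))) :=
  WithLp.prodContinuousLinearEquiv (ENNReal.ofReal p) ℂ _ _

noncomputable def sndCLM : (WithLp (ENNReal.ofReal p) (lp (fun _ : ℕ => ℂ) (ENNReal.ofReal p) ×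
    Lp ℂ (ENNReal.ofReal p) (volume.restrict (Set.Icc (0:ℝ) 1)))) →L[ℂ]
    Lp ℂ (ENNReal.ofReal p) (volume.restrict (Set.Icc (0:ℝ) 1)) :=
  (ContinuousLinearMap.snd ℂ _ _).comp (domCE : _ ≃L[ℂ] _).toContinuousLinearMap

theorem sndCLM_apply (x : DomT) : sndCLM x = x.snd := rfl

theorem dom_closure_span_natoms (hp : 1 ≤ p) (hp2 : p ≠ 2) :
    closure ((Submodule.span ℂ {x : DomT | NAtom p x} : Submodule ℂ DomT) : Set DomT)
      = {x : DomT | x.snd = 0} := by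
  have hp0 : 0 < p := lt_of_lt_of_le one_pos hp
  apply subset_antisymm
  · have hle : Submodule.span ℂ {x : DomT | NAtom p x} ≤ LinearMap.ker (sndCLM (p := p) : DomT →ₗ[ℂ] LpV) := by
      rw [Submodule.span_le]
      intro x hx
      have := ((dom_natom_iff hp hp2 x).mp hx).1
      simp only [SetLike.mem_coe, LinearMap.mem_ker, ContinuousLinearMap.coe_coe, sndCLM_apply]
      exact this
    have hcl : IsClosed ((LinearMap.ker (sndCLM (p := p) : DomT →ₗ[ℂ] LpV) : Submodule ℂ DomT) : Set DomT) :=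
      ContinuousLinearMap.isClosed_ker _
    intro x hx
    have h1 : x ∈ closure ((LinearMap.ker (sndCLM (p := p) : DomT →ₗ[ℂ] LpV) : Submodule ℂ DomT) : Set DomT) :=
      closure_mono hle hx
    rw [hcl.closure_eq] at h1
    simpa [LinearMap.mem_ker, sndCLM_apply] using h1
  · intro x hx
    have hx2 : x.snd = 0 := hx
    set a : lpN := x.fst with ha
    have H : HasSum (fun n => lp.single (ENNReal.ofReal p) n (a n)) a :=
      lp.hasSum_single ENNReal.ofReal_ne_top a
    set ι : lpN →L[ℂ] DomT :=
      ((domCE (p := p)) : _ ≃L[ℂ] _).symm.toContinuousLinearMap.comp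
        (ContinuousLinearMap.inl ℂ lpN LpV) with hι
    have hιfst : ∀ b : lpN, (ι b).fst = b := fun b => rfl
    have hιsnd : ∀ b : lpN, (ι b).snd = 0 := fun b => rfl
    have H2 : HasSum (fun n => ι (lp.single (ENNReal.ofReal p) n (a n))) (ι a) := H.mapL ι
    have hιa : ι a = x := dom_ext (hιfst a) (by rw [hιsnd, hx2])
    rw [hιa] at H2
    have hmem : ∀ n, ι (lp.single (ENNReal.ofReal p) n (a n)) ∈
        Submodule.span ℂ {x : DomT | NAtom p x} := by
      intro n
      rcases eq_or_ne (a n) 0 with h0 | h0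
      · have : (lp.single (ENNReal.ofReal p) n (a n) : lpN) = 0 := by
          apply lp_eq_zero_of_coords
          intro m
          rcases eq_or_ne m n with rfl | hm
          · rw [lp.single_apply_self, h0]
          · rw [lp.single_apply_ne _ _ _ hm]
        rw [this, map_zero]
        exact Submodule.zero_mem _
      · apply Submodule.subset_span
        rw [Set.mem_setOf_eq, dom_natom_iff hp hp2]
        refine ⟨hιsnd _, n, ?_, ?_⟩
        · rw [hιfst, lp.single_apply_self]; exact h0
        · rw [hιfst, lp.single_apply_self]
    exact mem_closure_of_tendsto H2 (Filter.Eventually.of_forall fun s =>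
      Submodule.sum_mem _ fun n _ => hmem n)

end DomTheory2

section Main

/-- Suppose `p ≥ 1`, `p ≠ 2`, and `T` is an isometric isomorphism of `ℓ^p ⊕_p L^p[0,1]`
onto an `L^p` space `B` which is the internal direct sum of disjointly supported subspaces
`U` (the closed span of the atoms of the subvector order) and `V` (containing no atoms).
Then `T` maps `ℓ^p ⊕ {0}` onto `U` and `{0} ⊕ L^p[0,1]` onto `V`. -/
theorem stmt16 {α : Type*} [MeasurableSpace α] (μ : Measure α)
    (p : ℝ) (hp : 1 ≤ p) (hp2 : p ≠ 2) [Fact (1 ≤ ENNReal.ofReal p)]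
    (U V : Submodule ℂ (Lp ℂ (ENNReal.ofReal p) μ))
    (hdisj : ∀ f ∈ U, ∀ g ∈ V, (f : α → ℂ) * (g : α → ℂ) =ᵐ[μ] 0)
    (hinf : U ⊓ V = ⊥) (hsup : U ⊔ V = ⊤)
    (hU : U = (Submodule.span ℂ {g : Lp ℂ (ENNReal.ofReal p) μ |
      SubvecAtom g}).topologicalClosure)
    (hV : ∀ g ∈ V, ¬ SubvecAtom g)
    (T : WithLp (ENNReal.ofReal p)
          ((lp (fun _ : ℕ => ℂ) (ENNReal.ofReal p)) ×
            (Lp ℂ (ENNReal.ofReal p) (volume.restrict (Set.Icc (0:ℝ) 1))))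
        ≃ₗᵢ[ℂ] Lp ℂ (ENNReal.ofReal p) μ) :
    (⇑T '' {x | (WithLp.equiv _ _ x).2 = 0} = (U : Set (Lp ℂ (ENNReal.ofReal p) μ))) ∧
    (⇑T '' {x | (WithLp.equiv _ _ x).1 = 0} = (V : Set (Lp ℂ (ENNReal.ofReal p) μ))) := by
  set DomT := WithLp (ENNReal.ofReal p)
      ((lp (fun _ : ℕ => ℂ) (ENNReal.ofReal p)) ×
        (Lp ℂ (ENNReal.ofReal p) (volume.restrict (Set.Icc (0:ℝ) 1)))) with hDomT
  set S : Set DomT := {x : DomT | NAtom p x} with hS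
  -- the atoms of B are the image of the atoms of the model space
  have hAtomsEq : {g : Lp ℂ (ENNReal.ofReal p) μ | SubvecAtom g} = ⇑T '' S := by
    ext g
    constructor
    · intro hg
      refine ⟨T.symm g, ?_, by simp⟩
      have h1 : NAtom p g := (subvecAtom_iff_natom hp hp2 g).mp hg
      have h2 : g = T (T.symm g) := by simp
      rw [h2] at h1
      exact (natom_map T (T.symm g)).mp h1
    · rintro ⟨x, hx, rfl⟩
      exact (subvecAtom_iff_natom hp hp2 _).mpr ((natom_map T x).mpr hx)
  -- span commutes with T
  have hspan : ((Submodule.span ℂ {g : Lp ℂ (ENNReal.ofReal p) μ | SubvecAtom g}) :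
      Set (Lp ℂ (ENNReal.ofReal p) μ)) = ⇑T '' ((Submodule.span ℂ S : Submodule ℂ DomT) :
      Set DomT) := by
    rw [hAtomsEq]
    have h1 : ⇑T '' S = ⇑(T.toLinearEquiv.toLinearMap) '' S := rfl
    rw [h1, Submodule.span_image]
    rfl
  have hU' : (U : Set (Lp ℂ (ENNReal.ofReal p) μ)) = ⇑T '' {x : DomT | x.snd = 0} := by
    rw [hU, Submodule.topologicalClosure_coe, hspan]
    have h2 : ⇑T '' ((Submodule.span ℂ S : Submodule ℂ DomT) : Set DomT)
        = ⇑T.toHomeomorph '' ((Submodule.span ℂ S : Submodule ℂ DomT) : Set DomT) := rfl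
    rw [h2, ← T.toHomeomorph.image_closure]
    rw [dom_closure_span_natoms hp hp2]
    rfl
  have hgoal1 : ⇑T '' {x : DomT | (WithLp.equiv _ _ x).2 = 0}
      = (U : Set (Lp ℂ (ENNReal.ofReal p) μ)) := by
    rw [hU']
    congr 1
  -- the key lemma for V
  have hkey : ∀ v, v ∈ V → (T.symm v).fst = 0 := by
    intro v hv
    apply lp_eq_zero_of_coords
    intro n
    set xn : DomT := (WithLp.equiv _ _).symm (lp.single (ENNReal.ofReal p) n (1:ℂ), 0) with hxn
    have hxn2 : xn.snd = 0 := rfl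
    have hxn1 : xn.fst = lp.single (ENNReal.ofReal p) n (1:ℂ) := rfl
    have hUmem : T xn ∈ U := by
      have : T xn ∈ (U : Set (Lp ℂ (ENNReal.ofReal p) μ)) := by
        rw [hU']
        exact Set.mem_image_of_mem _ hxn2
      exact this
    have hd := hdisj (T xn) hUmem v hv
    have hd1 : Dsj p (T xn) v := (Lp_dsj_iff hp hp2 _ _).mpr hd
    have hd2 : Dsj p xn (T.symm v) := by
      have h2 : v = T (T.symm v) := by simp
      rw [h2] at hd1
      exact (dsj_map T).mp hd1
    have hc := ((lp_dsj_iff hp hp2 _ _).mp ((dom_dsj_iff hp _ _).mp hd2).1) n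
    rw [hxn1, lp.single_apply_self, one_mul] at hc
    exact hc
  have hgoal2 : ⇑T '' {x : DomT | (WithLp.equiv _ _ x).1 = 0}
      = (V : Set (Lp ℂ (ENNReal.ofReal p) μ)) := by
    apply subset_antisymm
    · rintro _ ⟨x, hx, rfl⟩
      have hx1 : x.fst = 0 := hx
      have hmem : T x ∈ U ⊔ V := by rw [hsup]; trivial
      obtain ⟨u, hu, v, hv, huv⟩ := Submodule.mem_sup.mp hmem
      have hu' : u ∈ ⇑T '' {x : DomT | x.snd = 0} := by rw [← hU']; exact hu
      obtain ⟨w, hw, hTw⟩ := hu'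
      have hv' : v = T (x - w) := by
        rw [map_sub, hTw]
        rw [eq_sub_iff_add_eq, add_comm]
        exact huv
      have hfst : (T.symm v).fst = 0 := hkey v hv
      rw [hv'] at hfst
      have hsymm : T.symm (T (x - w)) = x - w := by simp
      rw [hsymm, WithLp.sub_fst, hx1, zero_sub, neg_eq_zero] at hfst
      have hw0 : w = 0 := dom_ext (by rw [hfst]; exact WithLp.zero_fst.symm)
        (by rw [hw]; exact WithLp.zero_snd.symm)
      have hu0 : u = 0 := by rw [← hTw, hw0, map_zero]
      have hvTx : v = T x := by rw [← huv, hu0, zero_add]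
      rw [← hvTx]
      exact hv
    · intro v hv
      exact ⟨T.symm v, hkey v hv, by simp⟩
  exact ⟨hgoal1, hgoal2⟩

end Main
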